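/- arXiv:1804.01326 — 2 statements merged into one kernel-verified Lean document; each statement's English description precedes it below -/
import Mathlib

section
/- Let T be a triangulated category and t = (U, V) a t-structure on T (a pair of full subcategories with Hom(U,V)=0 for U∈U, V∈V; U[1]⊆U and V⊆V[1]; and every object X fits in a triangle U → X → V → U[1] with U∈U, V∈V). Then the inclusion U → T admits a right adjoint and the inclusion V → T admits a left adjoint. -/
open CategoryTheory CategoryTheory.Limits CategoryTheory.Pretriangulated

universe v u

/-- for a t-structure `t = (U, V)` on a triangulated category `T`
(Hom-orthogonality, shift-closure, and decomposition triangles), the inclusion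
`U → T` admits a right adjoint and the inclusion `V → T` admits a left
adjoint (the truncation functors). -/
theorem stmt_9 (T : Type u) [Category.{v} T] [HasZeroObject T] [Preadditive T]
    [HasShift T ℤ] [∀ n : ℤ, (shiftFunctor T n).Additive] [Pretriangulated T]
    (U V : Set T)
    (t1 : ∀ X ∈ U, ∀ Y ∈ V, ∀ f : X ⟶ Y, f = 0)
    (t2U : ∀ X ∈ U, (X⟦(1 : ℤ)⟧) ∈ U)
    (t2V : ∀ X ∈ V, (X⟦(-1 : ℤ)⟧) ∈ V)
    (t3 : ∀ X : T, ∃ (U' : T) (_ : U' ∈ U) (V' : T) (_ : V' ∈ V)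
      (f : U' ⟶ X) (g : X ⟶ V') (h : V' ⟶ U'⟦(1 : ℤ)⟧),
        Triangle.mk f g h ∈ distTriang T) :
    (ObjectProperty.ι (· ∈ U)).IsLeftAdjoint ∧
      (ObjectProperty.ι (· ∈ V)).IsRightAdjoint := by
  choose tU hU tV hV f g h hdist using t3
  constructor
  · -- `U` inclusion has a right adjoint `X ↦ tU X`
    have bij : ∀ (A : ObjectProperty.FullSubcategory (· ∈ U)) (X : T),
        Function.Bijective (fun φ : A.obj ⟶ tU X => φ ≫ f X) := by
      intro A X
      constructor
      · intro φ φ' hEq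
        have h0 : (φ - φ') ≫ f X = 0 := by
          dsimp at hEq
          rw [Preadditive.sub_comp, hEq, sub_self]
        obtain ⟨ψ, hψ⟩ := Triangle.coyoneda_exact₂ _
          (inv_rot_of_distTriang _ (hdist X)) (φ - φ') h0
        have hψ0 : ψ = 0 := t1 A.obj A.2 _ (t2V _ (hV X)) ψ
        have : φ - φ' = 0 := by rw [hψ, hψ0, zero_comp]; rfl
        exact sub_eq_zero.mp this
      · intro ψ
        have h0 : ψ ≫ g X = 0 := t1 A.obj A.2 (tV X) (hV X) _
        obtain ⟨φ, hφ⟩ := Triangle.coyoneda_exact₂ _ (hdist X) ψ h0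
        exact ⟨φ, hφ.symm⟩
    let e : ∀ (A : ObjectProperty.FullSubcategory (· ∈ U)) (X : T),
        ((ObjectProperty.ι (· ∈ U)).obj A ⟶ X) ≃
          (A ⟶ (⟨tU X, hU X⟩ : ObjectProperty.FullSubcategory (· ∈ U))) :=
      fun A X => (Equiv.ofBijective _ (bij A X)).symm.trans
        { toFun := fun k => (ObjectProperty.homMk k : A ⟶ ⟨tU X, hU X⟩), invFun := fun k => k.hom,
          left_inv := fun _ => rfl, right_inv := fun _ => rfl }
    have key : ∀ (A : ObjectProperty.FullSubcategory (· ∈ U)) (X : T)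
        (ψ : (ObjectProperty.ι (· ∈ U)).obj A ⟶ X),
          ((Equiv.ofBijective (fun φ : A.obj ⟶ tU X => φ ≫ f X) (bij A X)).symm ψ) ≫ f X
            = ψ :=
      fun A X ψ => (Equiv.ofBijective _ (bij A X)).apply_symm_apply ψ
    have he : ∀ (A' A : ObjectProperty.FullSubcategory (· ∈ U)) (X : T) (k : A' ⟶ A)
        (ψ : (ObjectProperty.ι (· ∈ U)).obj A ⟶ X),
          e A' X ((ObjectProperty.ι (· ∈ U)).map k ≫ ψ) = k ≫ e A X ψ := by
      intro A' A X k ψ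
      apply ObjectProperty.hom_ext
      apply (bij A' X).injective
      show (Equiv.ofBijective _ (bij A' X)).symm (k.hom ≫ ψ) ≫ f X =
        (k.hom ≫ (Equiv.ofBijective _ (bij A X)).symm ψ) ≫ f X
      erw [key, Category.assoc, key]
    exact (Adjunction.adjunctionOfEquivRight e he).isLeftAdjoint
  · -- `V` inclusion has a left adjoint `X ↦ tV X`
    have bij : ∀ (X : T) (B : ObjectProperty.FullSubcategory (· ∈ V)),
        Function.Bijective (fun ψ : tV X ⟶ B.obj => g X ≫ ψ) := by
      intro X B
      constructor
      · intro ψ ψ' hEq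
        have h0 : g X ≫ (ψ - ψ') = 0 := by
          dsimp at hEq
          rw [Preadditive.comp_sub, hEq, sub_self]
        obtain ⟨χ, hχ⟩ := Triangle.yoneda_exact₃ _ (hdist X) (ψ - ψ') h0
        have hχ0 : χ = 0 := t1 _ (t2U _ (hU X)) B.obj B.2 χ
        have : ψ - ψ' = 0 := by rw [hχ, hχ0, comp_zero]; rfl
        exact sub_eq_zero.mp this
      · intro ψ
        have h0 : f X ≫ ψ = 0 := t1 (tU X) (hU X) B.obj B.2 _
        obtain ⟨φ, hφ⟩ := Triangle.yoneda_exact₂ _ (hdist X) ψ h0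
        exact ⟨φ, hφ.symm⟩
    let e : ∀ (X : T) (B : ObjectProperty.FullSubcategory (· ∈ V)),
        ((⟨tV X, hV X⟩ : ObjectProperty.FullSubcategory (· ∈ V)) ⟶ B) ≃
          (X ⟶ (ObjectProperty.ι (· ∈ V)).obj B) :=
      fun X B => (Equiv.mk (α := tV X ⟶ B.obj)
          (fun k => (ObjectProperty.homMk k :
            (⟨tV X, hV X⟩ : ObjectProperty.FullSubcategory (· ∈ V)) ⟶ B)) (fun k => k.hom)
          (fun _ => rfl) (fun _ => rfl)).symm.trans (Equiv.ofBijective _ (bij X B))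
    have he : ∀ (X : T) (B B' : ObjectProperty.FullSubcategory (· ∈ V)) (k : B ⟶ B')
        (ψ : (⟨tV X, hV X⟩ : ObjectProperty.FullSubcategory (· ∈ V)) ⟶ B),
          e X B' (ψ ≫ k) = e X B ψ ≫ (ObjectProperty.ι (· ∈ V)).map k := by
      intro X B B' k ψ
      show g X ≫ (ψ.hom ≫ k.hom) =
        (g X ≫ ψ.hom) ≫ k.hom
      rw [Category.assoc]
    exact (Adjunction.adjunctionOfEquivLeft e he).isRightAdjoint
end

section
/- Let C be a partial cosilting object in a triangulated category T with associated t-structure t = (U, V) and heart H(C) = U[-1] ∩ V. Then H_t^0(C) is an injective cogenerator of H(C): it is injective in the abelian category H(C), and for every nonzero M ∈ H(C) there is a nonzero morphism M → H_t^0(C). In particular, for M ∈ H(C) one has a natural isomorphism Hom_T(M, C) ≅ Hom_{H(C)}(M, H_t^0(C)). -/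
open CategoryTheory CategoryTheory.Limits CategoryTheory.Pretriangulated

universe v u

/-- for a partial cosilting object `C` with associated
t-structure `(U, V)` and heart `H(C) = U[-1] ∩ V`, the object `H⁰(C)` is an
injective cogenerator of the heart, and for `M` in the heart there is an
isomorphism `Hom_T(M, C) ≅ Hom_{H(C)}(M, H⁰(C))`. -/
theorem stmt_12 (T : Type u) [Category.{v} T] [HasZeroObject T] [Preadditive T]
    [HasShift T ℤ] [∀ n : ℤ, (shiftFunctor T n).Additive] [Pretriangulated T]
    (C : T) (U V : Set T)
    (t1 : ∀ X ∈ U, ∀ Y ∈ V, ∀ f : X ⟶ Y, f = 0)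
    (t2U : ∀ X ∈ U, (X⟦(1 : ℤ)⟧) ∈ U)
    (t2V : ∀ X ∈ V, (X⟦(-1 : ℤ)⟧) ∈ V)
    (τU τV : T → T)
    (hτU : ∀ X, τU X ∈ U) (hτV : ∀ X, τV X ∈ V)
    (htri : ∀ X : T, ∃ (f : τU X ⟶ X) (g : X ⟶ τV X)
      (h : τV X ⟶ (τU X)⟦(1 : ℤ)⟧), Triangle.mk f g h ∈ distTriang T)
    (hV : V = { Y : T | ∀ i : ℤ, 0 < i → ∀ f : Y ⟶ C⟦i⟧, f = 0 })
    (hC : C ∈ V)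
    -- the cohomological functor `H⁰` and the fact that it takes values in the
    -- heart `U[-1] ∩ V`
    (H0 : T → T) (hH0def : ∀ X, H0 X = τV ((τU (X⟦(1 : ℤ)⟧))⟦(-1 : ℤ)⟧))
    (hH0heart : ∀ X, ((H0 X)⟦(1 : ℤ)⟧ ∈ U) ∧ H0 X ∈ V) :
    letI Heart := ObjectProperty.FullSubcategory (fun X : T => (X⟦(1 : ℤ)⟧ ∈ U) ∧ X ∈ V)
    letI HC : Heart := ⟨H0 C, hH0heart C⟩
    Injective HC ∧
      (∀ M : Heart, ¬ IsZero M → ∃ f : M ⟶ HC, f ≠ 0) ∧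
      (∀ M : Heart, Nonempty ((M.obj ⟶ C) ≃ (M ⟶ HC))) := by
  have hVmem : ∀ {Y : T}, Y ∈ V → ∀ i : ℤ, 0 < i → ∀ f : Y ⟶ C⟦i⟧, f = 0 := by
    intro Y hY
    rw [hV] at hY
    exact hY
  -- shift-by-one faithfulness helper
  have hsh : ∀ {X Y : T} (f : X ⟶ Y), (shiftFunctor T (1 : ℤ)).map f = 0 → f = 0 := by
    intro X Y f h
    apply (shiftFunctor T (1 : ℤ)).map_injective
    rw [h, Functor.map_zero]
  -- post-composition with an isomorphism is bijective
  have postcomp_bij : ∀ {X Y Y' : T} (e : Y ⟶ Y') (_ : IsIso e),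
      Function.Bijective (fun u : X ⟶ Y => u ≫ e) := by
    intro X Y Y' e he
    constructor
    · intro u v h
      simpa using congrArg (fun t => t ≫ inv e) h
    · intro v
      exact ⟨v ≫ inv e, by simp⟩
  set ι := shiftFunctorCompIsoId T (-1 : ℤ) (1 : ℤ) (neg_add_cancel 1) with hι
  set κ := shiftFunctorCompIsoId T (1 : ℤ) (-1 : ℤ) (add_neg_cancel 1) with hκ
  set P := τU (C⟦(1 : ℤ)⟧) with hP
  set A := P⟦(-1 : ℤ)⟧ with hA
  obtain ⟨aD, bD, cD, hTD⟩ := htri (C⟦(1 : ℤ)⟧)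
  obtain ⟨aA, bA, cA, hTA⟩ := htri A
  have hdef : H0 C = τV A := hH0def C
  -- vanishing of maps P ⟶ C⟦j⟧ for j > 1
  have hPC : ∀ j : ℤ, 1 < j → ∀ g : P ⟶ C⟦j⟧, g = 0 := by
    intro j hj g
    obtain ⟨e, he⟩ := Triangle.yoneda_exact₂ _
      (inv_rot_of_distTriang _ hTD) g
      (hVmem (t2V _ (hτV (C⟦(1 : ℤ)⟧))) j (by linarith) _)
    have he0 : e = 0 := by
      obtain ⟨e₀, he₀⟩ := (shiftFunctor T (1 : ℤ)).map_surjective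
        (e ≫ (shiftFunctorAdd' T (j - 1) 1 j (by ring)).hom.app C)
      have h0 : e₀ = 0 := hVmem hC (j - 1) (by linarith) e₀
      rw [h0, Functor.map_zero] at he₀
      have : e ≫ (shiftFunctorAdd' T (j - 1) 1 j (by ring)).hom.app C = 0 := he₀.symm
      calc e = (e ≫ (shiftFunctorAdd' T (j - 1) 1 j (by ring)).hom.app C) ≫
            (shiftFunctorAdd' T (j - 1) 1 j (by ring)).inv.app C := by simp
        _ = 0 := by rw [this, zero_comp]
    rw [he, he0, comp_zero]
    rfl
  -- A ∈ V
  have hAV : A ∈ V := by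
    rw [hV]
    intro i hi f
    apply hsh
    have h0 : ι.inv.app P ≫ (shiftFunctor T (1 : ℤ)).map f ≫
        (shiftFunctorAdd' T i 1 (i + 1) rfl).inv.app C = 0 :=
      hPC (i + 1) (by linarith) _
    calc (shiftFunctor T (1 : ℤ)).map f
        = ι.hom.app P ≫ (ι.inv.app P ≫ (shiftFunctor T (1 : ℤ)).map f ≫
            (shiftFunctorAdd' T i 1 (i + 1) rfl).inv.app C) ≫
            (shiftFunctorAdd' T i 1 (i + 1) rfl).hom.app C := by simp
      _ = 0 := by rw [h0]; simp
  -- the first truncation triangle of A is degenerate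
  have haA : aA = 0 := t1 _ (hτU A) _ hAV aA
  have hzN : IsZero (τU A) := by
    obtain ⟨w, hw⟩ := Triangle.coyoneda_exact₃ _
      (rot_of_distTriang _ hTA) (𝟙 ((τU A)⟦(1 : ℤ)⟧))
      (by show 𝟙 _ ≫ (-(shiftFunctor T (1 : ℤ)).map aA) = 0; rw [haA]; simp)
    have hw0 : w = 0 := t1 _ (t2U _ (hτU A)) _ (hτV A) w
    rw [IsZero.iff_id_eq_zero]
    apply hsh
    rw [CategoryTheory.Functor.map_id]
    rw [hw0, zero_comp] at hw
    exact hw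
  have hbAiso : IsIso bA := (Triangle.isZero₁_iff_isIso₂ _ hTA).1 hzN
  -- the comparison map α : A ⟶ C and its shift
  set α : A ⟶ C := (shiftFunctor T (-1 : ℤ)).map aD ≫ κ.hom.app C with hαdef
  have hα1 : (shiftFunctor T (1 : ℤ)).map α = ι.hom.app P ≫ aD := by
    rw [hαdef, Functor.map_comp]
    have h1 := shift_neg_shift' (f := aD) (1 : ℤ)
    have h2 := shift_shiftFunctorCompIsoId_add_neg_cancel_hom_app (1 : ℤ) C
    rw [← hκ, ← hι] at h2
    rw [h2]
    rw [← hι] at h1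
    rw [h1]
    simp
    rfl
  -- bijectivity of composition with α for hearts
  have hbijα : ∀ M : T, (M⟦(1 : ℤ)⟧ ∈ U) → M ∈ V →
      Function.Bijective (fun u : M ⟶ A => u ≫ α) := by
    intro M hM1 _
    have hinj_aD : ∀ u : M⟦(1 : ℤ)⟧ ⟶ P, u ≫ aD = 0 → u = 0 := by
      intro u hu
      obtain ⟨g, hg⟩ := Triangle.coyoneda_exact₂ _
        (inv_rot_of_distTriang _ hTD) u hu
      have : g = 0 := t1 _ hM1 _ (t2V _ (hτV (C⟦(1 : ℤ)⟧))) g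
      rw [hg, this, zero_comp]
      rfl
    constructor
    · intro u v huv
      apply (shiftFunctor T (1 : ℤ)).map_injective
      have h1 : ((shiftFunctor T (1 : ℤ)).map u - (shiftFunctor T (1 : ℤ)).map v) ≫
          ι.hom.app P ≫ aD = 0 := by
        rw [Preadditive.sub_comp, ← hα1, ← Functor.map_comp, ← Functor.map_comp]
        have : u ≫ α = v ≫ α := huv
        rw [this, sub_self]
      have h2 := hinj_aD (((shiftFunctor T (1 : ℤ)).map u -
          (shiftFunctor T (1 : ℤ)).map v) ≫ ι.hom.app P) (by rw [Category.assoc]; exact h1)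
      have h3 : (shiftFunctor T (1 : ℤ)).map u - (shiftFunctor T (1 : ℤ)).map v = 0 := by
        calc (shiftFunctor T (1 : ℤ)).map u - (shiftFunctor T (1 : ℤ)).map v
            = (((shiftFunctor T (1 : ℤ)).map u - (shiftFunctor T (1 : ℤ)).map v) ≫
                ι.hom.app P) ≫ ι.inv.app P := by simp [A]
          _ = 0 := by rw [h2, zero_comp]
      exact sub_eq_zero.mp h3
    · intro v
      have hvb : (shiftFunctor T (1 : ℤ)).map v ≫ bD = 0 :=
        t1 _ hM1 _ (hτV (C⟦(1 : ℤ)⟧)) _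
      obtain ⟨g, hg⟩ := Triangle.coyoneda_exact₂ _ hTD
        ((shiftFunctor T (1 : ℤ)).map v) hvb
      obtain ⟨u, hu⟩ := (shiftFunctor T (1 : ℤ)).map_surjective (g ≫ ι.inv.app P)
      refine ⟨u, ?_⟩
      apply (shiftFunctor T (1 : ℤ)).map_injective
      rw [Functor.map_comp, hα1, hu, hg]
      simp [P]
      exact (Category.assoc _ _ _).trans (congrArg (g ≫ ·) (ι.inv_hom_id_app_assoc _ aD))
  -- the canonical map θ : H0 C ⟶ C
  set θ : H0 C ⟶ C := eqToHom hdef ≫ inv bA ≫ α with hθdef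
  have hbijθ : ∀ M : T, (M⟦(1 : ℤ)⟧ ∈ U) → M ∈ V →
      Function.Bijective (fun u : M ⟶ H0 C => u ≫ θ) := by
    intro M hM1 hM2
    have hcomp : (fun u : M ⟶ H0 C => u ≫ θ) =
        (fun u : M ⟶ A => u ≫ α) ∘ (fun u : M ⟶ H0 C => u ≫ (eqToHom hdef ≫ inv bA)) := by
      funext u
      simp [hθdef]
    rw [hcomp]
    exact (hbijα M hM1 hM2).comp (postcomp_bij _ inferInstance)
  refine ⟨?_, ?_, ?_⟩
  · -- Injectivity of HC
    refine ⟨fun {Xh Yh} g f hf => ?_⟩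
    set fT : Xh.obj ⟶ Yh.obj := f.hom with hfT
    obtain ⟨Z, g2, h2, hTZ⟩ := Pretriangulated.distinguished_cocone_triangle fT
    have hT3 := inv_rot_of_distTriang _ hTZ
    set T3 := (Triangle.mk fT g2 h2).invRotate with hT3def
    set E := Z⟦(-1 : ℤ)⟧ with hE
    set d : E ⟶ Xh.obj := T3.mor₁ with hd
    obtain ⟨aE, bE, cE, hTE⟩ := htri (E⟦(1 : ℤ)⟧)
    set G := (τU (E⟦(1 : ℤ)⟧))⟦(-1 : ℤ)⟧ with hG
    set q : G ⟶ E := (shiftFunctor T (-1 : ℤ)).map aE ≫ κ.hom.app E with hqdef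
    have hq1 : (shiftFunctor T (1 : ℤ)).map q = ι.hom.app (τU (E⟦(1 : ℤ)⟧)) ≫ aE := by
      rw [hqdef, Functor.map_comp]
      have h1 := shift_neg_shift' (f := aE) (1 : ℤ)
      have h2 := shift_shiftFunctorCompIsoId_add_neg_cancel_hom_app (1 : ℤ) E
      rw [← hκ, ← hι] at h2
      rw [h2]
      rw [← hι] at h1
      rw [h1]
      simp
    obtain ⟨aG, bG, cG, hTG⟩ := htri G
    have hGheart : ((τV G)⟦(1 : ℤ)⟧ ∈ U) ∧ τV G ∈ V := hH0def E ▸ hH0heart E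
    have hGbij : ∀ S : T, S ∈ V → Function.Bijective (fun u : τV G ⟶ S => bG ≫ u) := by
      intro S hS
      constructor
      · intro u v huv
        have huv' : bG ≫ u = bG ≫ v := huv
        have h1 : bG ≫ (u - v) = 0 := by
          rw [Preadditive.comp_sub, huv', sub_self]
        obtain ⟨w, hw⟩ := Triangle.yoneda_exact₃ _ hTG (u - v) h1
        have hw0 : w = 0 := t1 _ (t2U _ (hτU G)) _ hS w
        rw [hw0, comp_zero] at hw
        exact sub_eq_zero.mp hw
      · intro v
        obtain ⟨u, hu⟩ := Triangle.yoneda_exact₂ _ hTG v (t1 _ (hτU G) _ hS (aG ≫ v))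
        exact ⟨u, hu.symm⟩
    -- q ≫ d = 0 via the mono hypothesis
    have hqd : q ≫ d = 0 := by
      obtain ⟨tb, htb⟩ := (hGbij Xh.obj Xh.2.2).2 (q ≫ d)
      have htb' : bG ≫ tb = q ≫ d := htb
      have hd0 : d ≫ fT = 0 := comp_distTriang_mor_zero₁₂ _ hT3
      have h1 : bG ≫ (tb ≫ fT) = 0 := by
        rw [← Category.assoc, htb', Category.assoc, hd0, comp_zero]
      have h2 : tb ≫ fT = 0 := by
        apply (hGbij Yh.obj Yh.2.2).1
        show bG ≫ (tb ≫ fT) = bG ≫ 0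
        rw [h1, comp_zero]
      have h3 : (show (⟨τV G, hGheart⟩ :
          ObjectProperty.FullSubcategory fun X : T => (X⟦(1 : ℤ)⟧ ∈ U) ∧ X ∈ V) ⟶ Xh from
            ObjectProperty.homMk tb) ≫ f = 0 := ObjectProperty.hom_ext _ h2
      have h4 : (show (⟨τV G, hGheart⟩ :
          ObjectProperty.FullSubcategory fun X : T => (X⟦(1 : ℤ)⟧ ∈ U) ∧ X ∈ V) ⟶ Xh from
            ObjectProperty.homMk tb) = 0 := by
        rw [← cancel_mono f, h3, zero_comp]
      have h5 : tb = (0 : τV G ⟶ Xh.obj) := congrArg InducedCategory.Hom.hom h4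
      rw [← htb', h5, comp_zero]
    -- all maps E ⟶ C vanish
    have hY1 : ∀ v : (Yh.obj⟦(-1 : ℤ)⟧) ⟶ C, v = 0 := by
      intro v
      apply hsh
      have h0 : ι.inv.app Yh.obj ≫ (shiftFunctor T (1 : ℤ)).map v = 0 :=
        hVmem Yh.2.2 1 one_pos _
      calc (shiftFunctor T (1 : ℤ)).map v
          = ι.hom.app Yh.obj ≫ (ι.inv.app Yh.obj ≫ (shiftFunctor T (1 : ℤ)).map v) := by simp
        _ = 0 := by rw [h0, comp_zero]
    have hEC : ∀ w : E ⟶ C, w = 0 := by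
      intro w
      obtain ⟨x, hx⟩ := Triangle.yoneda_exact₂ _ (inv_rot_of_distTriang _ hT3) w (hY1 _)
      have hx' : w = d ≫ x := hx
      have hqw : q ≫ w = 0 := by
        have hassoc := Category.assoc q d x
        rw [hqd] at hassoc
        rw [hx']
        exact hassoc.symm.trans zero_comp
      have h4 : aE ≫ (shiftFunctor T (1 : ℤ)).map w = 0 := by
        have h5 : (shiftFunctor T (1 : ℤ)).map q ≫ (shiftFunctor T (1 : ℤ)).map w = 0 := by
          rw [← Functor.map_comp, hqw, Functor.map_zero]
        rw [hq1, Category.assoc] at h5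
        calc aE ≫ (shiftFunctor T (1 : ℤ)).map w
            = ι.inv.app (τU (E⟦(1 : ℤ)⟧)) ≫ ι.hom.app (τU (E⟦(1 : ℤ)⟧)) ≫
              aE ≫ (shiftFunctor T (1 : ℤ)).map w := by simp
          _ = 0 := by rw [h5, comp_zero]
      obtain ⟨y, hy⟩ := Triangle.yoneda_exact₂ _ hTE ((shiftFunctor T (1 : ℤ)).map w) h4
      have hy0 : y = 0 := hVmem (hτV _) 1 one_pos y
      apply hsh
      rw [hy, hy0, comp_zero]
      rfl
    -- extend g along f
    obtain ⟨y, hy⟩ := Triangle.yoneda_exact₂ _ hT3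
      ((show Xh.obj ⟶ H0 C from g.hom) ≫ θ) (hEC _)
    have hy' : (show Xh.obj ⟶ H0 C from g.hom) ≫ θ = fT ≫ y := hy
    obtain ⟨yh, hyh⟩ := (hbijθ Yh.obj Yh.2.1 Yh.2.2).2 y
    have hyh' : yh ≫ θ = y := hyh
    refine ⟨ObjectProperty.homMk yh, ?_⟩
    apply ObjectProperty.hom_ext
    apply (hbijθ Xh.obj Xh.2.1 Xh.2.2).1
    show (fT ≫ yh) ≫ θ = g.hom ≫ θ
    rw [Category.assoc, hyh']
    exact hy'.symm
  · -- cogeneration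
    intro M hM
    by_contra hcon
    push_neg at hcon
    apply hM
    have hzero : ∀ x : M.obj ⟶ C, x = 0 := by
      intro x
      obtain ⟨u, hu⟩ := (hbijθ M.obj M.2.1 M.2.2).2 x
      have hu' : u ≫ θ = x := hu
      have hu0 : u = (0 : M.obj ⟶ H0 C) := congrArg InducedCategory.Hom.hom (hcon (ObjectProperty.homMk u))
      rw [← hu', hu0, zero_comp]
    have hM1V : (M.obj⟦(1 : ℤ)⟧) ∈ V := by
      have hprop : (M.obj⟦(1 : ℤ)⟧) ∈
          {Y : T | ∀ i : ℤ, 0 < i → ∀ f : Y ⟶ C⟦i⟧, f = 0} := by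
        intro i hi g
        rcases eq_or_lt_of_le (by linarith : (1 : ℤ) ≤ i) with h1 | h1
        · subst h1
          obtain ⟨g₀, hg₀⟩ := (shiftFunctor T (1 : ℤ)).map_surjective g
          rw [← hg₀, hzero g₀, Functor.map_zero]
        · obtain ⟨g₀, hg₀⟩ := (shiftFunctor T (1 : ℤ)).map_surjective
            (g ≫ (shiftFunctorAdd' T (i - 1) 1 i (by ring)).hom.app C)
          have h0 : g₀ = 0 := hVmem M.2.2 (i - 1) (by linarith) g₀
          rw [h0, Functor.map_zero] at hg₀
          calc g = (g ≫ (shiftFunctorAdd' T (i - 1) 1 i (by ring)).hom.app C) ≫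
                (shiftFunctorAdd' T (i - 1) 1 i (by ring)).inv.app C := by simp
            _ = 0 := by rw [← hg₀, zero_comp]
      exact hV.symm ▸ hprop
    have hid : 𝟙 (M.obj⟦(1 : ℤ)⟧) = 0 := t1 _ M.2.1 _ hM1V _
    rw [IsZero.iff_id_eq_zero]
    apply ObjectProperty.hom_ext
    show 𝟙 M.obj = 0
    apply hsh
    rw [CategoryTheory.Functor.map_id]
    exact hid
  · -- the Hom-isomorphism
    intro M
    exact ⟨(Equiv.ofBijective _ (hbijθ M.obj M.2.1 M.2.2)).symm.trans ⟨fun f => ObjectProperty.homMk f, fun f => f.hom, fun _ => rfl, fun _ => rfl⟩⟩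
end
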